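/- Let C be the category whose objects are the F∞-modules E_0 and E(n) for n ≥ 4, and whose morphisms are injective functions preserving ∔, − and 0 (composition is composition of functions). Let k be any nontrivial ring. Then the subfunctor M of the principal projective P_{E_0} : C ⥤ ModuleCat k defined by M(Z) := the k-span of {e_{g ∘ u} : n ≥ 4, u : E_0 ⟶ E(n) in C, g : E(n) ⟶ Z in C} is not finitely generated. In particular, C is not locally Noetherian. -/

import Mathlib

open CategoryTheory
open scoped Classical

def Sset (n : ℕ) : Set (ℕ × ℕ) :=
  {p | 1 ≤ p.1 ∧ p.1 ≤ n ∧ 1 ≤ p.2 ∧ p.2 ≤ n ∧ p.1 ≤ p.2 + 1 ∧ p.2 ≤ p.1 + 2}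

/-- `S(n)` as a sublattice of `ℕ × ℕ` (componentwise max and min). -/
def SL (n : ℕ) : Sublattice (ℕ × ℕ) where
  carrier := Sset n
  supClosed' := by
    rintro ⟨i, k⟩ h1 ⟨l, m⟩ h2
    simp only [Sset, Set.mem_setOf_eq, Prod.sup_def] at h1 h2 ⊢
    omega
  infClosed' := by
    rintro ⟨i, k⟩ h1 ⟨l, m⟩ h2
    simp only [Sset, Set.mem_setOf_eq, Prod.inf_def] at h1 h2 ⊢
    omega

/-- `D(n) = WithBot S(n)`: `S(n)` with a bottom element `O` adjoined. -/
abbrev Dn (n : ℕ) : Type := WithBot ↥(SL n)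

/-- The element `a_{ik}` of `D(n)` (junk value `⊥` if `(i,k) ∉ S(n)`). -/
noncomputable def aElt (n i k : ℕ) : Dn n :=
  if h : (i, k) ∈ SL n then (↑(⟨(i, k), h⟩ : ↥(SL n)) : Dn n) else ⊥
/-- The 8-element sublattice of `ℕ × ℕ` underlying `D_0`. -/
def SL0 : Sublattice (ℕ × ℕ) where
  carrier := {(1,1),(1,2),(2,1),(2,2),(3,3),(3,4),(4,3),(4,4)}
  supClosed' := by
    intro a ha b hb
    simp only [Set.mem_insert_iff, Set.mem_singleton_iff] at *
    rcases ha with rfl|rfl|rfl|rfl|rfl|rfl|rfl|rfl <;>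
      rcases hb with rfl|rfl|rfl|rfl|rfl|rfl|rfl|rfl <;> decide
  infClosed' := by
    intro a ha b hb
    simp only [Set.mem_insert_iff, Set.mem_singleton_iff] at *
    rcases ha with rfl|rfl|rfl|rfl|rfl|rfl|rfl|rfl <;>
      rcases hb with rfl|rfl|rfl|rfl|rfl|rfl|rfl|rfl <;> decide

/-- The 9-element B-module `D_0` (with bottom element `O` adjoined). -/
abbrev D0 : Type := WithBot ↥SL0

/-- The element `A_{ik}` of `D_0` (junk value `⊥` if `(i,k)` is not in the lattice). -/
noncomputable def A0 (i k : ℕ) : D0 :=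
  if h : (i, k) ∈ SL0 then (↑(⟨(i, k), h⟩ : ↥SL0) : D0) else ⊥
/-- F∞-module structure on `Option (Bool × α)` for a meet-semilattice `α`. -/
abbrev Emod (α : Type) : Type := Option (Bool × α)

/-- Negation: `−none = none`, `−some (ε, p) = some (¬ε, p)`. -/
def Emod.neg {α : Type} : Emod α → Emod α :=
  Option.map (fun p => (!p.1, p.2))

/-- Addition: `x ∔ none = none ∔ x = none`, and
`some (ε, p) ∔ some (ε', q) = some (ε, p ⊓ q)` if `ε = ε'`, `none` otherwise. -/
noncomputable def Emod.add {α : Type} [SemilatticeInf α] : Emod α → Emod α → Emod α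
  | some (ε, p), some (ε', q) => if ε = ε' then some (ε, p ⊓ q) else none
  | _, _ => none

/-- Nonzero vectors of the free F∞-module of rank `m`. -/
abbrev FVec (m : ℕ) : Type := {σ : Fin m → Option Bool // σ ≠ fun _ => none}

/-- The free F∞-module of rank `m`, with zero `none`. -/
abbrev Fm (m : ℕ) : Type := Option (FVec m)

/-- Negation on the free F∞-module: Boolean negation on each defined value. -/
def Fm.neg {m : ℕ} : Fm m → Fm m :=
  Option.map (fun σ => ⟨fun i => (σ.val i).map (fun b => !b), by
    intro hcontra
    apply σ.prop
    funext i
    have h := congrFun hcontra i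
    simpa using h⟩)

/-- Addition on the free F∞-module: `none` absorbs; two nonzero vectors add to `none`
if they clash in some coordinate, and otherwise to their pointwise merge. -/
noncomputable def Fm.add {m : ℕ} : Fm m → Fm m → Fm m
  | some σ, some τ =>
      if ∃ (i : Fin m) (b : Bool), σ.val i = some b ∧ τ.val i = some (!b) then none
      else some ⟨fun i => (σ.val i).or (τ.val i), by
        intro hcontra
        apply σ.prop
        funext i
        have h := congrFun hcontra i
        cases hv : σ.val i with
        | none => rfl
        | some b => rw [hv] at h; simp [Option.or] at h⟩
  | _, _ => none

/-- A type with F∞-module operations `0`, `∔`, `−`. -/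
class FStr (α : Type) where
  z : α
  add : α → α → α
  neg : α → α

noncomputable instance {α : Type} [SemilatticeInf α] : FStr (Emod α) :=
  ⟨none, Emod.add, Emod.neg⟩

noncomputable instance {m : ℕ} : FStr (Fm m) :=
  ⟨none, Fm.add, Fm.neg⟩

/-- A map preserving `0`, `∔` and `−`. -/
def IsFHom {α β : Type} [FStr α] [FStr β] (f : α → β) : Prop :=
  f FStr.z = FStr.z ∧ (∀ x y, f (FStr.add x y) = FStr.add (f x) (f y)) ∧
    ∀ x, f (FStr.neg x) = FStr.neg (f x)
/-- A functor `F : C ⥤ ModuleCat k` is finitely generated if finitely many elements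
`α_j ∈ F(Z_j)` exist such that every `F(W)` is the `k`-span of their images. -/
def FunctorFG {C : Type*} [Category C] {k : Type} [Ring k]
    (F : C ⥤ ModuleCat.{0} k) : Prop :=
  ∃ (ℓ : ℕ) (Z : Fin ℓ → C) (α : ∀ j, F.obj (Z j)),
    ∀ W : C, (⊤ : Submodule k (F.obj W)) =
      Submodule.span k {v | ∃ (j : Fin ℓ) (h : Z j ⟶ W), v = F.map h (α j)}

/-- A subfunctor of `F`: a choice of submodules closed under all the maps `F(h)`. -/
def IsSubfunctor {C : Type*} [Category C] {k : Type} [Ring k]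
    (F : C ⥤ ModuleCat.{0} k) (M : ∀ Z : C, Submodule k (F.obj Z)) : Prop :=
  ∀ ⦃Z W : C⦄ (h : Z ⟶ W) (x : F.obj Z), x ∈ M Z → F.map h x ∈ M W

/-- A subfunctor `M` of `F` is finitely generated if finitely many elements
`α_j ∈ M(Z_j)` exist such that every `M(W)` is the `k`-span of their images. -/
def SubfunctorFG {C : Type*} [Category C] {k : Type} [Ring k]
    (F : C ⥤ ModuleCat.{0} k) (M : ∀ Z : C, Submodule k (F.obj Z)) : Prop :=
  ∃ (ℓ : ℕ) (Z : Fin ℓ → C) (α : ∀ j, F.obj (Z j)),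
    (∀ j, α j ∈ M (Z j)) ∧
    ∀ W : C, M W = Submodule.span k {v | ∃ (j : Fin ℓ) (h : Z j ⟶ W), v = F.map h (α j)}

/-- A category is locally Noetherian if for every left-Noetherian ring `k`, every
subfunctor of every finitely generated functor `C ⥤ ModuleCat k` is finitely
generated. -/
def LocallyNoetherian (C : Type*) [Category C] : Prop :=
  ∀ (k : Type) [Ring k] [IsNoetherianRing k] (F : C ⥤ ModuleCat.{0} k),
    FunctorFG F → ∀ M : ∀ Z : C, Submodule k (F.obj Z), IsSubfunctor F M → SubfunctorFG F M
/-- Objects: the F∞-module `E_0` and the F∞-modules `E(n)` for `n ≥ 4`. -/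
inductive EObj : Type
  | e0 : EObj
  | en : (n : ℕ) → 4 ≤ n → EObj

/-- The underlying meet-semilattice of an object. -/
def EObj.base : EObj → Type
  | .e0 => ↥SL0
  | .en n _ => ↥(SL n)

noncomputable instance (X : EObj) : SemilatticeInf X.base := by
  cases X with
  | e0 => exact inferInstanceAs (SemilatticeInf ↥SL0)
  | en n _ => exact inferInstanceAs (SemilatticeInf ↥(SL n))

/-- The underlying F∞-module of an object. -/
abbrev EObj.carrier (X : EObj) : Type := Emod X.base

/-- The category of the F∞-modules `E_0` and `E(n)` (`n ≥ 4`) with injective maps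
preserving `∔`, `−` and `0` as morphisms. -/
noncomputable instance : Category.{0} EObj where
  Hom X Y := {f : X.carrier → Y.carrier // IsFHom f ∧ Function.Injective f}
  id X := ⟨id, ⟨rfl, fun _ _ => rfl, fun _ => rfl⟩, fun _ _ h => h⟩
  comp f g := ⟨g.1 ∘ f.1,
    ⟨by simp [Function.comp, f.2.1.1, g.2.1.1],
     fun x y => by simp [Function.comp, f.2.1.2.1, g.2.1.2.1],
     fun x => by simp [Function.comp, f.2.1.2.2, g.2.1.2.2]⟩,
    fun _ _ h => f.2.2 (g.2.2 h)⟩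
  id_comp f := rfl
  comp_id f := rfl
  assoc f g h := rfl

/-- The generating set of the subfunctor `M` of the principal projective `P_{E_0}`:
the basis vectors `e_{g ∘ u}` for `u : E_0 ⟶ E(n)`, `g : E(n) ⟶ Z`, `n ≥ 4`. -/
def MsetE (k : Type) [Ring k] (Z : EObj) : Set ((EObj.e0 ⟶ Z) →₀ k) :=
  {v | ∃ (n : ℕ) (h4 : 4 ≤ n) (u : EObj.e0 ⟶ EObj.en n h4) (g : EObj.en n h4 ⟶ Z),
    v = Finsupp.single (u ≫ g) (1 : k)}

section Test
lemma mem_SL {m : ℕ} {p : ℕ × ℕ} :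
    p ∈ SL m ↔ 1 ≤ p.1 ∧ p.1 ≤ m ∧ 1 ≤ p.2 ∧ p.2 ≤ m ∧ p.1 ≤ p.2 + 1 ∧ p.2 ≤ p.1 + 2 :=
  Iff.rfl

lemma coe_inf_SL {m : ℕ} (a b : ↥(SL m)) :
    ((a ⊓ b : ↥(SL m)) : ℕ × ℕ) = (min (a:ℕ×ℕ).1 (b:ℕ×ℕ).1, min (a:ℕ×ℕ).2 (b:ℕ×ℕ).2) := by
  rw [Sublattice.coe_inf]
  rfl

lemma le_SL {m : ℕ} (a b : ↥(SL m)) :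
    a ≤ b ↔ (a:ℕ×ℕ).1 ≤ (b:ℕ×ℕ).1 ∧ (a:ℕ×ℕ).2 ≤ (b:ℕ×ℕ).2 := by
  rw [← Subtype.coe_le_coe, Prod.le_def]

lemma mem_SL0_iff {p : ℕ × ℕ} :
    p ∈ SL0 ↔ (1 ≤ p.1 ∧ p.1 ≤ 2 ∧ 1 ≤ p.2 ∧ p.2 ≤ 2) ∨ (3 ≤ p.1 ∧ p.1 ≤ 4 ∧ 3 ≤ p.2 ∧ p.2 ≤ 4) := by
  show p ∈ ({(1,1),(1,2),(2,1),(2,2),(3,3),(3,4),(4,3),(4,4)} : Set (ℕ×ℕ)) ↔ _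
  simp only [Set.mem_insert_iff, Set.mem_singleton_iff, Prod.ext_iff]
  obtain ⟨i, k⟩ := p
  simp only [Prod.mk.injEq]  -- maybe unneeded
  omega
end Test

lemma mkmem {m i k : ℕ} (h : 1 ≤ i ∧ i ≤ m ∧ 1 ≤ k ∧ k ≤ m ∧ i ≤ k+1 ∧ k ≤ i+2) :
    ((i,k) : ℕ×ℕ) ∈ SL m := mem_SL.mpr h

theorem key_bound {m N : ℕ} (hm : 4 ≤ m) (hN : 4 ≤ N) (φ : ↥(SL m) → ↥(SL N))
    (hφ : ∀ a b, φ (a ⊓ b) = φ a ⊓ φ b) (hinj : Function.Injective φ)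
    (qa qb qc : ↥(SL m))
    (ha : ((φ qa : ↥(SL N)) : ℕ × ℕ) = (N - 1, N))
    (hb : ((φ qb : ↥(SL N)) : ℕ × ℕ) = (N, N - 1))
    (hc : ((φ qc : ↥(SL N)) : ℕ × ℕ) = (1, 1)) :
    N ≤ 3 * m := by
  have mono : ∀ a b : ↥(SL m), a ≤ b → φ a ≤ φ b := by
    intro a b hab
    have h1 : φ (a ⊓ b) = φ a ⊓ φ b := hφ a b
    rw [inf_eq_left.mpr hab] at h1
    rw [h1]; exact inf_le_right
  have memφ : ∀ q : ↥(SL m), 1 ≤ (φ q : ℕ×ℕ).1 ∧ (φ q : ℕ×ℕ).1 ≤ N ∧ 1 ≤ (φ q : ℕ×ℕ).2 ∧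
      (φ q : ℕ×ℕ).2 ≤ N ∧ (φ q : ℕ×ℕ).1 ≤ (φ q : ℕ×ℕ).2 + 1 ∧ (φ q : ℕ×ℕ).2 ≤ (φ q : ℕ×ℕ).1 + 2 :=
    fun q => mem_SL.mp (φ q).2
  have nephi : ∀ a b : ↥(SL m), a ≠ b →
      ¬((φ a : ℕ×ℕ).1 = (φ b : ℕ×ℕ).1 ∧ (φ a : ℕ×ℕ).2 = (φ b : ℕ×ℕ).2) := by
    intro a b hab h
    exact hab (hinj (Subtype.ext (Prod.ext h.1 h.2)))
  have infco : ∀ a b c : ↥(SL m), a = b ⊓ c →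
      (φ a : ℕ×ℕ).1 = min (φ b : ℕ×ℕ).1 (φ c : ℕ×ℕ).1 ∧
      (φ a : ℕ×ℕ).2 = min (φ b : ℕ×ℕ).2 (φ c : ℕ×ℕ).2 := by
    intro a b c habc
    have h1 : φ a = φ b ⊓ φ c := by rw [habc, hφ]
    rw [h1, coe_inf_SL]
    exact ⟨rfl, rfl⟩
  have step1 : ∀ A B C : ↥(SL m), A = B ⊓ C → B ≠ A → C ≠ A →
      (φ B : ℕ×ℕ).1 ≤ (φ A : ℕ×ℕ).1 + 3 ∧ (φ C : ℕ×ℕ).1 ≤ (φ A : ℕ×ℕ).1 + 3 := by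
    intro A B C h1 h2 h3
    have e1 := infco A B C h1
    have n1 := nephi B A h2
    have n2 := nephi C A h3
    have mA := memφ A; have mB := memφ B; have mC := memφ C
    omega
  have step2 : ∀ A B C D E : ↥(SL m), A = B ⊓ C → B = D ⊓ E → B ≠ A → C ≠ A → D ≠ B →
      (φ E : ℕ×ℕ).1 ≤ (φ A : ℕ×ℕ).1 + 3 := by
    intro A B C D E h1 h2 hBA hCA hDB
    have e1 := infco A B C h1
    have e2 := infco B D E h2
    have n1 := nephi B A hBA
    have n2 := nephi C A hCA
    have n3 := nephi D B hDB
    have mA := memφ A; have mB := memφ B; have mC := memφ C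
    have mD := memφ D; have mE := memφ E
    omega
  obtain ⟨base, hbaseval⟩ : ∃ b : ↥(SL m), (b : ℕ×ℕ) = (1,1) :=
    ⟨⟨(1,1), mkmem (by omega)⟩, rfl⟩
  have diag : ∀ t, 1 ≤ t → t + 1 ≤ m → ∀ A : ↥(SL m), (A : ℕ×ℕ) = (t,t) →
      (φ A : ℕ×ℕ).1 + 3 ≤ (φ base : ℕ×ℕ).1 + 3 * t := by
    intro t
    induction t with
    | zero => intro h; exact absurd h (by omega)
    | succ s ih =>
      intro ht hsm A hA
      by_cases hs : s = 0
      · subst hs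
        have hAb : A = base := Subtype.ext (hA.trans hbaseval.symm)
        rw [hAb]
      · have hs1 : 1 ≤ s := by omega
        obtain ⟨At, hAt⟩ : ∃ q : ↥(SL m), (q : ℕ×ℕ) = (s,s) := ⟨⟨(s,s), mkmem (by omega)⟩, rfl⟩
        obtain ⟨B, hB⟩ : ∃ q : ↥(SL m), (q : ℕ×ℕ) = (s,s+1) := ⟨⟨(s,s+1), mkmem (by omega)⟩, rfl⟩
        obtain ⟨C, hC⟩ : ∃ q : ↥(SL m), (q : ℕ×ℕ) = (s+1,s) := ⟨⟨(s+1,s), mkmem (by omega)⟩, rfl⟩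
        obtain ⟨D, hD⟩ : ∃ q : ↥(SL m), (q : ℕ×ℕ) = (s,s+2) := ⟨⟨(s,s+2), mkmem (by omega)⟩, rfl⟩
        have hABC : At = B ⊓ C := by
          apply Subtype.ext
          rw [coe_inf_SL, hAt, hB, hC]
          simp only [Prod.mk.injEq]
          omega
        have hBDA : B = D ⊓ A := by
          apply Subtype.ext
          rw [coe_inf_SL, hB, hD, hA]
          simp only [Prod.mk.injEq]
          omega
        have hBAt : B ≠ At := by
          intro e; have := congrArg Subtype.val e
          rw [hB, hAt] at this
          simp only [Prod.mk.injEq] at this; omega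
        have hCAt : C ≠ At := by
          intro e; have := congrArg Subtype.val e
          rw [hC, hAt] at this
          simp only [Prod.mk.injEq] at this; omega
        have hDB : D ≠ B := by
          intro e; have := congrArg Subtype.val e
          rw [hD, hB] at this
          simp only [Prod.mk.injEq] at this; omega
        have h2 := step2 At B C D A hABC hBDA hBAt hCAt hDB
        have ihres := ih hs1 (by omega) At hAt
        omega
  obtain ⟨A1, hA1⟩ : ∃ q : ↥(SL m), (q : ℕ×ℕ) = (m-1,m) := ⟨⟨(m-1,m), mkmem (by omega)⟩, rfl⟩
  obtain ⟨A2, hA2⟩ : ∃ q : ↥(SL m), (q : ℕ×ℕ) = (m,m-1) := ⟨⟨(m,m-1), mkmem (by omega)⟩, rfl⟩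
  obtain ⟨Am1, hAm1⟩ : ∃ q : ↥(SL m), (q : ℕ×ℕ) = (m-1,m-1) := ⟨⟨(m-1,m-1), mkmem (by omega)⟩, rfl⟩
  have hM12 : Am1 = A1 ⊓ A2 := by
    apply Subtype.ext
    rw [coe_inf_SL, hAm1, hA1, hA2]
    simp only [Prod.mk.injEq]
    omega
  have hA1ne : A1 ≠ Am1 := by
    intro e; have := congrArg Subtype.val e
    rw [hA1, hAm1] at this
    simp only [Prod.mk.injEq] at this; omega
  have hA2ne : A2 ≠ Am1 := by
    intro e; have := congrArg Subtype.val e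
    rw [hA2, hAm1] at this
    simp only [Prod.mk.injEq] at this; omega
  have hs1 := step1 Am1 A1 A2 hM12 hA1ne hA2ne
  have hdiag := diag (m-1) (by omega) (by omega) Am1 hAm1
  have hbaseqc : base ≤ qc := by
    have mq := mem_SL.mp qc.2
    rw [le_SL, hbaseval]
    omega
  have hX0 : (φ base : ℕ×ℕ).1 ≤ 1 := by
    have := mono base qc hbaseqc
    rw [le_SL, hc] at this
    omega
  have hba : ¬ qb ≤ qa := by
    intro h
    have := mono qb qa h
    rw [le_SL, ha, hb] at this
    omega
  have hqaA : qa ≤ A1 ∨ qa ≤ A2 := by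
    have ma := mem_SL.mp qa.2
    have mb := mem_SL.mp qb.2
    by_cases h1 : (qa : ℕ×ℕ).1 + 1 ≤ m
    · left; rw [le_SL, hA1]; omega
    · right; rw [le_SL, hA2]
      refine ⟨by omega, ?_⟩
      by_contra hk
      exact hba (by rw [le_SL]; omega)
  have mA1 := memφ A1
  have mA2 := memφ A2
  rcases hqaA with h | h
  · have := mono qa A1 h
    rw [le_SL, ha] at this
    omega
  · have := mono qa A2 h
    rw [le_SL, ha] at this
    omega

lemma FStr_z_eq {α : Type} [SemilatticeInf α] : (FStr.z : Emod α) = none := rfl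
lemma FStr_add_eq {α : Type} [SemilatticeInf α] :
    (FStr.add : Emod α → Emod α → Emod α) = Emod.add := rfl

lemma extract {α β : Type} [SemilatticeInf α] [SemilatticeInf β] (H : Emod α → Emod β)
    (hz : H none = none)
    (hadd : ∀ x y : Emod α, H (Emod.add x y) = Emod.add (H x) (H y))
    (hinj : Function.Injective H) (ε : Bool) :
    ∃ (δ : Bool) (φ : α → β), Function.Injective φ ∧ (∀ a b, φ (a ⊓ b) = φ a ⊓ φ b) ∧
      ∀ q, H (some (ε, q)) = some (δ, φ q) := by
  by_cases hne : Nonempty α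
  case neg =>
    exact ⟨true, fun q => absurd ⟨q⟩ hne, fun q => absurd ⟨q⟩ hne,
      fun q => absurd ⟨q⟩ hne, fun q => absurd ⟨q⟩ hne⟩
  obtain ⟨q₀⟩ := hne
  have hsome : ∀ q : α, ∃ d r, H (some (ε, q)) = some (d, r) := by
    intro q
    cases hq : H (some (ε, q)) with
    | none => exact absurd (hinj (hq.trans hz.symm)) (by simp)
    | some dr =>
      obtain ⟨d0, r0⟩ := dr
      exact ⟨d0, r0, rfl⟩
  choose d r hdr using hsome
  have haddq : ∀ q q' : α,
      some (d (q ⊓ q'), r (q ⊓ q')) = Emod.add (some (d q, r q)) (some (d q', r q')) := by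
    intro q q'
    have h1 := hadd (some (ε, q)) (some (ε, q'))
    rw [hdr, hdr] at h1
    rw [← hdr]
    convert h1 using 2
    simp [Emod.add]
  have hdconst : ∀ q : α, d q = d q₀ := by
    intro q
    by_contra hne'
    have h1 := haddq q q₀
    simp [Emod.add, hne'] at h1
  refine ⟨d q₀, fun q => r q, ?_, ?_, ?_⟩
  · intro a b hab
    have hab' : r a = r b := hab
    have h1 : H (some (ε, a)) = H (some (ε, b)) := by
      rw [hdr, hdr, hab', hdconst a, hdconst b]
    have h2 := hinj h1
    simpa using h2
  · intro a b
    have h1 := haddq a b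
    rw [hdconst a, hdconst b] at h1
    simp [Emod.add] at h1
    exact h1.2
  · intro q; rw [hdr, hdconst q]

lemma mkmem0 {i k : ℕ}
    (h : (1 ≤ i ∧ i ≤ 2 ∧ 1 ≤ k ∧ k ≤ 2) ∨ (3 ≤ i ∧ i ≤ 4 ∧ 3 ≤ k ∧ k ≤ 4)) :
    ((i,k) : ℕ×ℕ) ∈ SL0 := mem_SL0_iff.mpr h

/-- The embedding of the two squares of `S_0` at the bottom and top corners of `S(N)`. -/
noncomputable def psiN (N : ℕ) (hN : 4 ≤ N) : ↥SL0 → ↥(SL N) := fun p =>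
  if h2 : (p : ℕ×ℕ).1 ≤ 2 then
    ⟨(p : ℕ×ℕ), by
      have hb := mem_SL0_iff.mp p.2
      exact mem_SL.mpr (by omega)⟩
  else
    ⟨((p : ℕ×ℕ).1 + N - 4, (p : ℕ×ℕ).2 + N - 4), by
      have hb := mem_SL0_iff.mp p.2
      exact mem_SL.mpr (by omega)⟩

lemma psiN_val (N : ℕ) (hN : 4 ≤ N) (p : ↥SL0) :
    ((psiN N hN p : ↥(SL N)) : ℕ×ℕ) =
      if (p : ℕ×ℕ).1 ≤ 2 then (p : ℕ×ℕ)
      else ((p : ℕ×ℕ).1 + N - 4, (p : ℕ×ℕ).2 + N - 4) := by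
  unfold psiN
  split <;> rfl

lemma coe_inf_SL0 (a b : ↥SL0) :
    ((a ⊓ b : ↥SL0) : ℕ × ℕ) = (min (a:ℕ×ℕ).1 (b:ℕ×ℕ).1, min (a:ℕ×ℕ).2 (b:ℕ×ℕ).2) := by
  rw [Sublattice.coe_inf]; rfl

lemma psiN_inf (N : ℕ) (hN : 4 ≤ N) (a b : ↥SL0) :
    psiN N hN (a ⊓ b) = psiN N hN a ⊓ psiN N hN b := by
  have ba := mem_SL0_iff.mp a.2
  have bb := mem_SL0_iff.mp b.2
  apply Subtype.ext
  rw [coe_inf_SL, psiN_val, psiN_val, psiN_val, coe_inf_SL0]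
  obtain ⟨⟨a1, a2⟩, hma⟩ := a
  obtain ⟨⟨b1, b2⟩, hmb⟩ := b
  simp only at ba bb ⊢
  split_ifs <;> simp_all [Prod.ext_iff] <;> omega

lemma psiN_inj (N : ℕ) (hN : 4 ≤ N) : Function.Injective (psiN N hN) := by
  intro a b h
  have hv := congrArg Subtype.val h
  rw [psiN_val, psiN_val] at hv
  have ba := mem_SL0_iff.mp a.2
  have bb := mem_SL0_iff.mp b.2
  apply Subtype.ext
  obtain ⟨⟨a1, a2⟩, hma⟩ := a
  obtain ⟨⟨b1, b2⟩, hmb⟩ := b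
  simp only at ba bb hv ⊢
  split_ifs at hv <;> simp_all [Prod.ext_iff] <;> omega

/-- The morphism `E_0 ⟶ E(N)` placing the two squares at opposite corners. -/
noncomputable def vmor (N : ℕ) (hN : 4 ≤ N) : EObj.e0 ⟶ EObj.en N hN :=
  ⟨Option.map (fun bp : Bool × ↥SL0 => (bp.1, psiN N hN bp.2)),
   ⟨rfl,
    by
      intro x y
      rcases x with _ | ⟨bx, px⟩
      · rfl
      · rcases y with _ | ⟨yb, py⟩
        · rfl
        · show Option.map _ (Emod.add _ _) = Emod.add _ _
          by_cases hb : bx = yb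
          · subst hb
            cases bx
            · exact congrArg (fun x => some (false, x)) (psiN_inf N hN px py)
            · exact congrArg (fun x => some (true, x)) (psiN_inf N hN px py)
          · cases bx <;> cases yb
            exacts [absurd rfl hb, rfl, rfl, absurd rfl hb],
    by
      intro x
      rcases x with _ | ⟨bx, px⟩ <;> rfl⟩,
   Option.map_injective (by
     rintro ⟨b1, p1⟩ ⟨b2, p2⟩ h
     simp only [Prod.mk.injEq] at h
     have h1 := congrArg Prod.fst h
     have h2 := congrArg Prod.snd h
     exact Prod.ext h1 (psiN_inj N hN h2))⟩

lemma no_factor {m N : ℕ} (hm : 4 ≤ m) (hN : 4 ≤ N) (h3 : 3 * m < N)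
    (f : EObj.e0 ⟶ EObj.en m hm) (g : EObj.en m hm ⟶ EObj.en N hN) :
    f ≫ g ≠ vmor N hN := by
  intro he
  have happ : ∀ z : EObj.carrier EObj.e0, g.1 (f.1 z) = (vmor N hN).1 z :=
    fun z => congrFun (congrArg Subtype.val he) z
  have hfz : f.1 none = none := f.2.1.1
  have hgz : g.1 none = none := g.2.1.1
  obtain ⟨P1, hP1⟩ : ∃ p : ↥SL0, (p : ℕ×ℕ) = (1,1) := ⟨⟨(1,1), mkmem0 (by omega)⟩, rfl⟩
  obtain ⟨P2, hP2⟩ : ∃ p : ↥SL0, (p : ℕ×ℕ) = (3,4) := ⟨⟨(3,4), mkmem0 (by omega)⟩, rfl⟩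
  obtain ⟨P3, hP3⟩ : ∃ p : ↥SL0, (p : ℕ×ℕ) = (4,3) := ⟨⟨(4,3), mkmem0 (by omega)⟩, rfl⟩
  have hvval : ∀ p : ↥SL0, (vmor N hN).1 (some (true, p)) = some (true, psiN N hN p) :=
    fun p => rfl
  have hfsome : ∀ p : ↥SL0, ∃ ε q, f.1 (some (true, p)) = some (ε, q) := by
    intro p
    cases hq : f.1 (some (true, p)) with
    | none =>
      exfalso
      have h1 := happ (some (true, p))
      rw [hq, hgz, hvval p] at h1
      cases h1
    | some dr =>
      obtain ⟨d0, r0⟩ := dr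
      exact ⟨d0, r0, rfl⟩
  obtain ⟨ε1, q1, hq1⟩ := hfsome P1
  obtain ⟨ε2, q2, hq2⟩ := hfsome P2
  obtain ⟨ε3, q3, hq3⟩ := hfsome P3
  have hfadd : ∀ x y : Emod ↥SL0, f.1 (Emod.add x y) = Emod.add (f.1 x) (f.1 y) :=
    f.2.1.2.1
  have hsign : ∀ (p p' : ↥SL0) ε q ε' q', f.1 (some (true, p)) = some (ε, q) →
      f.1 (some (true, p')) = some (ε', q') → ε = ε' := by
    intro p p' ε q ε' q' h1 h2
    by_contra hne
    have h4 : f.1 (some (true, p ⊓ p')) = Emod.add (f.1 (some (true, p))) (f.1 (some (true, p'))) :=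
      hfadd (some (true, p)) (some (true, p'))
    have h5 : Emod.add (some (true, p)) (some (true, p')) = some (true, p ⊓ p') := by
      simp [Emod.add]
    rw [h1, h2] at h4
    have h6 : Emod.add (some (ε, q)) (some (ε', q')) = none := by
      simp [Emod.add, hne]
    rw [h6] at h4
    have h7 := happ (some (true, p ⊓ p'))
    rw [h4, hgz] at h7
    cases h7.trans (hvval (p ⊓ p'))
  have hε2 : ε2 = ε1 := hsign P2 P1 _ _ _ _ hq2 hq1
  have hε3 : ε3 = ε1 := hsign P3 P1 _ _ _ _ hq3 hq1
  have hgadd : ∀ x y : Emod ↥(SL m), g.1 (Emod.add x y) = Emod.add (g.1 x) (g.1 y) :=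
    g.2.1.2.1
  obtain ⟨δ, φ, hφinj, hφinf, hH⟩ :=
    extract (α := ↥(SL m)) (β := ↥(SL N)) g.1 hgz hgadd g.2.2 ε1
  have hpoint : ∀ (p : ↥SL0) ε q, f.1 (some (true, p)) = some (ε, q) → ε = ε1 →
      some (δ, φ q) = some (true, psiN N hN p) := by
    intro p ε q h1 h2
    have h8 := happ (some (true, p))
    rw [h1, h2] at h8
    exact (hH q).symm.trans (h8.trans (hvval p))
  have h1 := hpoint P1 ε1 q1 hq1 rfl
  have h2 := hpoint P2 ε2 q2 hq2 hε2
  have h3' := hpoint P3 ε3 q3 hq3 hε3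
  simp only [Option.some.injEq, Prod.mk.injEq] at h1 h2 h3'
  have hco1 : ((φ q1 : ↥(SL N)) : ℕ×ℕ) = (1, 1) := by
    rw [h1.2, psiN_val, hP1]
    simp
  have hco2 : ((φ q2 : ↥(SL N)) : ℕ×ℕ) = (N - 1, N) := by
    rw [h2.2, psiN_val, hP2]
    simp [Prod.ext_iff]
    omega
  have hco3 : ((φ q3 : ↥(SL N)) : ℕ×ℕ) = (N, N - 1) := by
    rw [h3'.2, psiN_val, hP3]
    simp [Prod.ext_iff]
    omega
  exact absurd (key_bound hm hN φ hφinf hφinj q2 q3 q1 hco2 hco3 hco1) (by omega)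

noncomputable def enc0 : ↥SL0 → Fin 8 := fun p =>
  ⟨if (p : ℕ×ℕ).1 ≤ 2 then ((p:ℕ×ℕ).1 - 1) + 2*((p:ℕ×ℕ).2 - 1)
    else 4 + ((p:ℕ×ℕ).1 - 3) + 2*((p:ℕ×ℕ).2 - 3), by
    have hb := mem_SL0_iff.mp p.2
    split_ifs <;> omega⟩

lemma enc0_inj : Function.Injective enc0 := by
  intro a b h
  have hb1 := mem_SL0_iff.mp a.2
  have hb2 := mem_SL0_iff.mp b.2
  have hv := congrArg Fin.val h
  simp only [enc0] at hv
  apply Subtype.ext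
  rw [Prod.ext_iff]
  split_ifs at hv <;> omega

def el9 : Fin 9 → ℕ×ℕ := fun j => match j with
  | 0 => (1,1) | 1 => (1,2) | 2 => (2,1) | 3 => (2,2) | 4 => (2,3)
  | 5 => (3,2) | 6 => (3,3) | 7 => (3,4) | 8 => (4,3)

lemma el9_inj : Function.Injective el9 := by decide

lemma el9_mem {n : ℕ} (hn : 4 ≤ n) (j : Fin 9) : el9 j ∈ SL n := by
  fin_cases j <;> simp [el9, mem_SL] <;> omega

lemma no_to_e0 {n : ℕ} (hn : 4 ≤ n) (g : EObj.en n hn ⟶ EObj.e0) : False := by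
  have hinj : Function.Injective g.1 := g.2.2
  have hmapinj : Function.Injective (fun cq : Bool × ↥SL0 => (cq.1, enc0 cq.2)) := by
    rintro ⟨c1, r1⟩ ⟨c2, r2⟩ hh
    simp only [Prod.mk.injEq] at hh
    exact Prod.ext hh.1 (enc0_inj hh.2)
  let F1 : Bool × Fin 9 → Option (Bool × Fin 8) := fun bj =>
    Option.map (fun cq : Bool × ↥SL0 => (cq.1, enc0 cq.2))
      (g.1 (some (bj.1, ⟨el9 bj.2, el9_mem hn bj.2⟩)))
  have hF1 : Function.Injective F1 := by
    intro x y hxy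
    simp only [F1] at hxy
    have h3 := hinj (Option.map_injective hmapinj hxy)
    simp only [Option.some.injEq, Prod.mk.injEq, Subtype.mk.injEq] at h3
    have h31 := congrArg Prod.fst h3
    have h32 := congrArg Subtype.val (congrArg Prod.snd h3)
    exact Prod.ext h31 (el9_inj h32)
  have hcard := Fintype.card_le_of_injective F1 hF1
  simp [Fintype.card_option] at hcard

lemma MsetE_e0 (k : Type) [Ring k] : MsetE k EObj.e0 = ∅ := by
  ext v
  simp only [MsetE, Set.mem_setOf_eq, Set.mem_empty_iff_false, iff_false]
  rintro ⟨n, h4, u, g, -⟩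
  exact no_to_e0 h4 g

def msize : EObj → ℕ
  | .e0 => 0
  | .en n _ => n

lemma gen_zero (k : Type) [Ring k] {N : ℕ} (hN : 4 ≤ N) (W : EObj)
    (hW : ∀ m hm4, W = EObj.en m hm4 → 3*m < N)
    (a : (EObj.e0 ⟶ W) →₀ k) (ha : a ∈ Submodule.span k (MsetE k W))
    (h : W ⟶ EObj.en N hN) :
    Finsupp.mapDomain (· ≫ h) a (vmor N hN) = 0 := by
  cases W with
  | e0 =>
    rw [MsetE_e0, Submodule.span_empty, Submodule.mem_bot] at ha
    subst ha
    rw [Finsupp.mapDomain_zero]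
    rfl
  | en m hm4 =>
    apply Finsupp.mapDomain_notin_range
    rintro ⟨u, hu⟩
    exact no_factor hm4 hN (hW m hm4 rfl) u h hu

theorem conj1 (k : Type) [Ring k] [Nontrivial k] :
    ¬∃ (ℓ : ℕ) (Z : Fin ℓ → EObj) (α : ∀ j, (EObj.e0 ⟶ Z j) →₀ k),
      (∀ j, α j ∈ Submodule.span k (MsetE k (Z j))) ∧
      ∀ W : EObj, Submodule.span k (MsetE k W) =
        Submodule.span k
          {v | ∃ (j : Fin ℓ) (h : Z j ⟶ W), v = Finsupp.mapDomain (· ≫ h) (α j)} := by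
  rintro ⟨ℓ, Z, α, hα, hspan⟩
  obtain ⟨Mx, hMxdef⟩ : ∃ M, M = Finset.univ.sup (fun j : Fin ℓ => msize (Z j)) := ⟨_, rfl⟩
  obtain ⟨N, hNdef⟩ : ∃ N, N = 3 * Mx + 4 := ⟨_, rfl⟩
  have hN : 4 ≤ N := by omega
  have hsingle : Finsupp.single (vmor N hN) (1:k) ∈
      Submodule.span k (MsetE k (EObj.en N hN)) := by
    apply Submodule.subset_span
    exact ⟨N, hN, vmor N hN, 𝟙 _, by rw [Category.comp_id]⟩
  rw [hspan] at hsingle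
  have hle : Submodule.span k
      {v | ∃ (j : Fin ℓ) (h : Z j ⟶ EObj.en N hN), v = Finsupp.mapDomain (· ≫ h) (α j)} ≤
      LinearMap.ker (Finsupp.lapply (vmor N hN) :
        ((EObj.e0 ⟶ EObj.en N hN) →₀ k) →ₗ[k] k) := by
    rw [Submodule.span_le]
    rintro w ⟨j, h, rfl⟩
    simp only [SetLike.mem_coe, LinearMap.mem_ker, Finsupp.lapply_apply]
    refine gen_zero k hN (Z j) (fun m hm4 he => ?_) (α j) (hα j) h
    have h1 : msize (Z j) ≤ Mx := by
      rw [hMxdef]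
      exact Finset.le_sup (f := fun j : Fin ℓ => msize (Z j)) (Finset.mem_univ j)
    rw [he] at h1
    simp only [msize] at h1
    omega
  have hker := hle hsingle
  rw [LinearMap.mem_ker, Finsupp.lapply_apply, Finsupp.single_eq_same] at hker
  exact one_ne_zero hker

/-- The principal projective `P_{E_0}`. -/
noncomputable def PE (k : Type) [Ring k] : EObj ⥤ ModuleCat.{0} k where
  obj Z := ModuleCat.of k ((EObj.e0 ⟶ Z) →₀ k)
  map {Z W} h := ModuleCat.ofHom (Finsupp.lmapDomain k k (fun f : EObj.e0 ⟶ Z => f ≫ h))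
  map_id Z := by
    refine ModuleCat.hom_ext (LinearMap.ext fun x => ?_)
    show Finsupp.mapDomain (· ≫ 𝟙 Z) x = x
    have : (fun f : EObj.e0 ⟶ Z => f ≫ 𝟙 Z) = id := funext fun f => Category.comp_id f
    rw [this, Finsupp.mapDomain_id]
  map_comp {Z W V} h g := by
    refine ModuleCat.hom_ext (LinearMap.ext fun x => ?_)
    show Finsupp.mapDomain (· ≫ (h ≫ g)) x
      = Finsupp.mapDomain (· ≫ g) (Finsupp.mapDomain (· ≫ h) x)
    rw [← Finsupp.mapDomain_comp]
    rfl

lemma PE_map_apply (k : Type) [Ring k] {Z W : EObj} (h : Z ⟶ W)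
    (x : (EObj.e0 ⟶ Z) →₀ k) :
    (PE k).map h x = Finsupp.mapDomain (· ≫ h) x := rfl

lemma span_single_mem (k : Type) [Ring k] (W : EObj) (x : (EObj.e0 ⟶ W) →₀ k) :
    x ∈ Submodule.span k {v : (EObj.e0 ⟶ W) →₀ k |
      ∃ (_ : Fin 1) (h : EObj.e0 ⟶ W),
        v = Finsupp.mapDomain (· ≫ h) (Finsupp.single (𝟙 EObj.e0) (1:k))} := by
  refine Finsupp.induction_linear x (Submodule.zero_mem _)
    (fun f g hf hg => Submodule.add_mem _ hf hg) (fun a b => ?_)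
  have h1 : Finsupp.single a b = b • Finsupp.single a (1:k) := by
    rw [Finsupp.smul_single, smul_eq_mul, mul_one]
  rw [h1]
  refine Submodule.smul_mem _ b (Submodule.subset_span ?_)
  exact ⟨0, a, (Finsupp.mapDomain_single (f := fun x => x ≫ a)
    (a := 𝟙 EObj.e0) (b := (1:k))).symm⟩

lemma PE_FG (k : Type) [Ring k] : FunctorFG (PE k) := by
  refine ⟨1, fun _ => EObj.e0, fun _ => Finsupp.single (𝟙 EObj.e0) 1, fun W => ?_⟩
  exact (Submodule.eq_top_iff'.mpr fun x => span_single_mem k W x).symm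

lemma PE_subfunctor (k : Type) [Ring k] :
    IsSubfunctor (PE k) (fun Z => Submodule.span k (MsetE k Z)) := by
  intro Z W h x hx
  have hle : Submodule.span k (MsetE k Z) ≤
      Submodule.comap ((PE k).map h).hom (Submodule.span k (MsetE k W)) := by
    refine Submodule.span_le.mpr ?_
    rintro w ⟨n, h4, u, gg, rfl⟩
    exact Submodule.subset_span ⟨n, h4, u, gg ≫ h, Finsupp.mapDomain_single⟩
  exact hle hx

theorem not_LN : ¬ LocallyNoetherian EObj := by
  intro hLN
  obtain ⟨ℓ, Z, α, hα, hspan⟩ :=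
    hLN ℤ (PE ℤ) (PE_FG ℤ) (fun Z => Submodule.span ℤ (MsetE ℤ Z)) (PE_subfunctor ℤ)
  exact conj1 ℤ ⟨ℓ, Z, α, hα, fun W => hspan W⟩

/-- The subfunctor `M` of the principal projective `P_{E_0} : C ⥤ ModuleCat k`
spanned by the `e_{g ∘ u}` (for `u : E_0 ⟶ E(n)`, `g : E(n) ⟶ Z`, `n ≥ 4`) is not
finitely generated; in particular `C` is not locally Noetherian. -/
theorem stmt12 (k : Type) [Ring k] [Nontrivial k] :
    (¬∃ (ℓ : ℕ) (Z : Fin ℓ → EObj) (α : ∀ j, (EObj.e0 ⟶ Z j) →₀ k),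
      (∀ j, α j ∈ Submodule.span k (MsetE k (Z j))) ∧
      ∀ W : EObj, Submodule.span k (MsetE k W) =
        Submodule.span k
          {v | ∃ (j : Fin ℓ) (h : Z j ⟶ W), v = Finsupp.mapDomain (· ≫ h) (α j)}) ∧
    ¬LocallyNoetherian EObj := by
  exact ⟨conj1 k, not_LN⟩
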